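/- arXiv:1911.11020 — 3 statements merged into one kernel-verified Lean document; each statement's English description precedes it below -/
import Mathlib

section
/- Let d ≥ 1, a ∈ (0,2], and for x > 0 define f(x, R) = R^d/d + (x/a)(1 + R^{-2})^{a/2} for R > 0. Then f(x, ·) has a unique minimizer R = R(x) > 0 satisfying R^{d+a}(1+R²)^{1-a/2} = x; moreover x ↦ R(x) is monotone increasing, R(x) = x^{1/(d+a)}(1+o(1)) as x → 0⁺, and the minimal value φ(x) = f(x, R(x)) satisfies φ(x) = (1/d + 1/a) x^{d/(d+a)} (1+o(1)) as x → 0⁺ and φ(x) = (x/a)(1+o(1)) as x → +∞. -/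
open Filter

/-- `f(x,R) = R^d/d + (x/a)(1+R^{-2})^{a/2}`. -/
noncomputable def fRad (d : ℕ) (a x R : ℝ) : ℝ :=
  R ^ (d : ℝ) / d + (x / a) * (1 + R ^ (-2 : ℝ)) ^ (a / 2)

namespace NashAux

open Set

noncomputable def gFun (d : ℕ) (a R : ℝ) : ℝ := R ^ ((d:ℝ) + a) * (1 + R ^ 2) ^ (1 - a/2)

lemma gFun_pos {d : ℕ} {a R : ℝ} (hR : 0 < R) : 0 < gFun d a R := by unfold gFun; positivity

lemma gFun_strictMonoOn {d : ℕ} {a : ℝ} (ha0 : 0 < a) (ha2 : a ≤ 2) :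
    StrictMonoOn (gFun d a) (Ioi (0:ℝ)) := by
  intro R1 h1 R2 h2 h12
  unfold gFun
  have hq : (0:ℝ) ≤ 1 - a/2 := by linarith
  have h1' : (0:ℝ) < R1 := h1
  have hp : (0:ℝ) < (d:ℝ) + a := by positivity
  have A : R1 ^ ((d:ℝ)+a) < R2 ^ ((d:ℝ)+a) := Real.rpow_lt_rpow h1'.le h12 hp
  have B : (1 + R1 ^ 2) ^ (1 - a/2) ≤ (1 + R2 ^ 2) ^ (1 - a/2) :=
    Real.rpow_le_rpow (by positivity) (by nlinarith) hq
  have hB : (0:ℝ) < (1 + R1 ^ 2) ^ (1 - a/2) := by positivity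
  have hA : (0:ℝ) ≤ R1 ^ ((d:ℝ)+a) := by positivity
  nlinarith

lemma gFun_le {d : ℕ} {a : ℝ} (ha0 : 0 < a) (ha2 : a ≤ 2) {R : ℝ} (hR : 0 < R) (hR1 : R ≤ 1) :
    gFun d a R ≤ R ^ ((d:ℝ) + a) * 2 := by
  unfold gFun
  have : (1 + R ^ 2) ^ (1 - a/2) ≤ 2 := by
    calc (1 + R ^ 2) ^ (1 - a/2) ≤ (2:ℝ) ^ (1 - a/2) :=
          Real.rpow_le_rpow (by positivity) (by nlinarith) (by linarith)
      _ ≤ (2:ℝ) ^ (1:ℝ) := Real.rpow_le_rpow_of_exponent_le one_le_two (by linarith)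
      _ = 2 := Real.rpow_one 2
  have h0 : (0:ℝ) ≤ R ^ ((d:ℝ)+a) := by positivity
  nlinarith

lemma gFun_ge {d : ℕ} {a : ℝ} (ha2 : a ≤ 2) {R : ℝ} (hR : 0 < R) :
    R ^ ((d:ℝ) + a) ≤ gFun d a R := by
  unfold gFun
  have h1 : (1:ℝ) ≤ (1 + R ^ 2) ^ (1 - a/2) :=
    Real.one_le_rpow (by nlinarith) (by linarith)
  have h0 : (0:ℝ) ≤ R ^ ((d:ℝ)+a) := by positivity
  nlinarith

lemma gFun_exists {d : ℕ} {a : ℝ} (ha0 : 0 < a) (ha2 : a ≤ 2) (x : ℝ) (hx : 0 < x) :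
    ∃ R, 0 < R ∧ gFun d a R = x := by
  have hp : (0:ℝ) < (d:ℝ) + a := by positivity
  obtain ⟨R1, hR1pos, hR1le, hR1small⟩ : ∃ R1 : ℝ, 0 < R1 ∧ R1 ≤ 1 ∧ R1 ^ ((d:ℝ)+a) * 2 ≤ x := by
    refine ⟨min 1 ((x/2) ^ (((d:ℝ)+a)⁻¹)), by positivity, min_le_left _ _, ?_⟩
    have h2 : (min 1 ((x/2) ^ (((d:ℝ)+a)⁻¹))) ^ ((d:ℝ)+a) ≤ ((x/2) ^ (((d:ℝ)+a)⁻¹)) ^ ((d:ℝ)+a) :=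
      Real.rpow_le_rpow (by positivity) (min_le_right _ _) hp.le
    have h3 : ((x/2) ^ (((d:ℝ)+a)⁻¹)) ^ ((d:ℝ)+a) = x/2 := by
      rw [← Real.rpow_mul (by positivity), inv_mul_cancel₀ hp.ne', Real.rpow_one]
    nlinarith
  obtain ⟨R2, hR2pos, hR2ge⟩ : ∃ R2 : ℝ, 0 < R2 ∧ x ≤ R2 ^ ((d:ℝ)+a) := by
    refine ⟨max 1 (x ^ (((d:ℝ)+a)⁻¹)), by positivity, ?_⟩
    have h2 : (x ^ (((d:ℝ)+a)⁻¹)) ^ ((d:ℝ)+a) ≤ (max 1 (x ^ (((d:ℝ)+a)⁻¹))) ^ ((d:ℝ)+a) :=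
      Real.rpow_le_rpow (by positivity) (le_max_right _ _) hp.le
    have h3 : (x ^ (((d:ℝ)+a)⁻¹)) ^ ((d:ℝ)+a) = x := by
      rw [← Real.rpow_mul hx.le, inv_mul_cancel₀ hp.ne', Real.rpow_one]
    linarith
  have hle : gFun d a R1 ≤ x := le_trans (gFun_le ha0 ha2 hR1pos hR1le) hR1small
  have hge : x ≤ gFun d a R2 := le_trans hR2ge (gFun_ge ha2 hR2pos)
  have hR12 : R1 ≤ R2 := by
    by_contra h
    push_neg at h
    have := gFun_strictMonoOn (d := d) ha0 ha2 (mem_Ioi.mpr hR2pos) (mem_Ioi.mpr hR1pos) h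
    linarith
  have hcont : ContinuousOn (gFun d a) (Icc R1 R2) := by
    apply ContinuousOn.mul
    · apply ContinuousOn.rpow_const continuousOn_id
      intro y hy; left; exact ne_of_gt (lt_of_lt_of_le hR1pos hy.1)
    · apply ContinuousOn.rpow_const (by fun_prop)
      intro y hy; left; positivity
  obtain ⟨R, hRmem, hRval⟩ := intermediate_value_Icc hR12 hcont ⟨hle, hge⟩
  exact ⟨R, lt_of_lt_of_le hR1pos hRmem.1, hRval⟩

lemma rpow_neg_two {R : ℝ} (hR : 0 < R) : R ^ (-2:ℝ) = (R ^ 2)⁻¹ := by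
  rw [show (-2:ℝ) = ((-2:ℤ):ℝ) by norm_num, Real.rpow_intCast]
  simp [zpow_neg]

lemma one_add_inv_sq {R : ℝ} (hR : 0 < R) :
    1 + R ^ (-2:ℝ) = (1 + R ^ 2) * R ^ (-2:ℝ) := by
  rw [rpow_neg_two hR]
  field_simp
  ring

lemma one_add_inv_sq_pos {R : ℝ} (hR : 0 < R) : 0 < 1 + R ^ (-2:ℝ) := by
  have := rpow_neg_two hR; positivity

lemma rpow_shift {R : ℝ} (hR : 0 < R) (c : ℝ) :
    (1 + R ^ (-2:ℝ)) ^ c = (1 + R ^ 2) ^ c * R ^ (-2*c) := by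
  rw [one_add_inv_sq hR,
    Real.mul_rpow (by positivity) (by positivity), ← Real.rpow_mul hR.le]

lemma key_cancel {d : ℕ} {a R : ℝ} (hR : 0 < R) :
    R ^ ((-2:ℝ)-1) * (1 + R ^ (-2:ℝ)) ^ (a/2-1) * gFun d a R = R ^ ((d:ℝ)-1) := by
  have hb : (0:ℝ) < 1 + R ^ 2 := by positivity
  rw [rpow_shift hR (a/2-1), gFun]
  simp only [Real.rpow_def_of_pos hR, Real.rpow_def_of_pos hb, ← Real.exp_add]
  rw [Real.exp_eq_exp]
  ring

lemma hasDerivAt_fRad {d : ℕ} {a x R : ℝ} (hd : 1 ≤ d) (ha0 : 0 < a) (hR : 0 < R) :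
    HasDerivAt (fun r => fRad d a x r) (R ^ ((d:ℝ)-1) * (1 - x / gFun d a R)) R := by
  have hd0 : (d:ℝ) ≠ 0 := Nat.cast_ne_zero.mpr (by omega)
  have h1 : HasDerivAt (fun r : ℝ => r ^ ((d:ℝ))) ((d:ℝ) * R ^ ((d:ℝ)-1)) R :=
    Real.hasDerivAt_rpow_const (Or.inl hR.ne')
  have hinner : HasDerivAt (fun r : ℝ => 1 + r ^ (-2:ℝ)) ((-2) * R ^ ((-2:ℝ)-1)) R :=
    (Real.hasDerivAt_rpow_const (p := (-2:ℝ)) (Or.inl hR.ne')).const_add 1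
  have houter : HasDerivAt (fun r : ℝ => (1 + r ^ (-2:ℝ)) ^ (a/2))
      (((-2) * R ^ ((-2:ℝ)-1)) * (a/2) * (1 + R ^ (-2:ℝ)) ^ (a/2-1)) R :=
    hinner.rpow_const (Or.inl (one_add_inv_sq_pos hR).ne')
  have h := (h1.div_const (d:ℝ)).add (houter.const_mul (x/a))
  have hkey : R ^ ((-2:ℝ)-1) * (1 + R ^ (-2:ℝ)) ^ (a/2-1) = R ^ ((d:ℝ)-1) / gFun d a R := by
    rw [eq_div_iff (gFun_pos hR).ne']
    exact key_cancel hR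
  refine h.congr_deriv ?_
  symm
  rw [mul_div_cancel_left₀ _ hd0]
  have expand : x / a * (-2 * R ^ ((-2:ℝ)-1) * (a / 2) * (1 + R ^ (-2:ℝ)) ^ (a/2-1))
      = -(x * (R ^ ((-2:ℝ)-1) * (1 + R ^ (-2:ℝ)) ^ (a/2-1))) := by
    field_simp
  rw [expand, hkey]
  have hg := (gFun_pos (d := d) (a := a) hR).ne'
  field_simp
  ring

lemma fRad_min {d : ℕ} {a x R₀ : ℝ} (hd : 1 ≤ d) (ha0 : 0 < a) (ha2 : a ≤ 2)
    (hx : 0 < x) (hR₀ : 0 < R₀) (hg : gFun d a R₀ = x) :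
    ∀ R', 0 < R' → R' ≠ R₀ → fRad d a x R₀ < fRad d a x R' := by
  have hcont : ∀ y ∈ Ioi (0:ℝ), ContinuousAt (fun r => fRad d a x r) y := fun y hy =>
    (hasDerivAt_fRad hd ha0 hy).continuousAt
  have hderiv : ∀ y, 0 < y → deriv (fun r => fRad d a x r) y
      = y ^ ((d:ℝ)-1) * (1 - x / gFun d a y) := fun y hy =>
    (hasDerivAt_fRad hd ha0 hy).deriv
  intro R' hR' hne
  rcases lt_or_gt_of_ne hne with h | h
  · have : StrictAntiOn (fun r => fRad d a x r) (Icc R' R₀) := by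
      apply strictAntiOn_of_deriv_neg (convex_Icc _ _)
      · exact fun y hy => (hcont y (lt_of_lt_of_le hR' hy.1)).continuousWithinAt
      · intro y hy
        rw [interior_Icc] at hy
        have hy0 : 0 < y := lt_trans hR' hy.1
        rw [hderiv y hy0]
        have hgy : gFun d a y < x := by
          rw [← hg]
          exact gFun_strictMonoOn ha0 ha2 (mem_Ioi.mpr hy0) (mem_Ioi.mpr hR₀) hy.2
        have : 1 - x / gFun d a y < 0 := by
          rw [sub_neg, lt_div_iff₀ (gFun_pos hy0)]
          linarith
        have hp : (0:ℝ) < y ^ ((d:ℝ)-1) := by positivity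
        nlinarith
    exact this (left_mem_Icc.mpr h.le) (right_mem_Icc.mpr h.le) h
  · have : StrictMonoOn (fun r => fRad d a x r) (Icc R₀ R') := by
      apply strictMonoOn_of_deriv_pos (convex_Icc _ _)
      · exact fun y hy => (hcont y (lt_of_lt_of_le hR₀ hy.1)).continuousWithinAt
      · intro y hy
        rw [interior_Icc] at hy
        have hy0 : 0 < y := lt_trans hR₀ hy.1
        rw [hderiv y hy0]
        have hgy : x < gFun d a y := by
          rw [← hg]
          exact gFun_strictMonoOn ha0 ha2 (mem_Ioi.mpr hR₀) (mem_Ioi.mpr hy0) hy.1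
        have : 0 < 1 - x / gFun d a y := by
          rw [sub_pos, div_lt_one (gFun_pos hy0)]
          linarith
        have hp : (0:ℝ) < y ^ ((d:ℝ)-1) := by positivity
        nlinarith
    exact this (left_mem_Icc.mpr h.le) (right_mem_Icc.mpr h.le) h

/-- Key product identity: `g(r)·(1+r^{-2})^{a/2} = r^d (1+r²)`. -/
lemma gFun_mul {d : ℕ} {a r : ℝ} (hr : 0 < r) :
    gFun d a r * (1 + r ^ (-2:ℝ)) ^ (a/2) = r ^ (d:ℝ) * (1 + r ^ 2) := by
  have hb : (0:ℝ) < 1 + r ^ 2 := by positivity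
  rw [rpow_shift hr (a/2), gFun,
    show r ^ (d:ℝ) * (1 + r ^ 2) = r ^ (d:ℝ) * (1 + r ^ 2) ^ (1:ℝ) by rw [Real.rpow_one]]
  simp only [Real.rpow_def_of_pos hr, Real.rpow_def_of_pos hb, ← Real.exp_add]
  rw [Real.exp_eq_exp]
  ring

/-- `f(g(r), r) = r^d (1/d + (1+r²)/a)`. -/
lemma fRad_gFun {d : ℕ} {a r : ℝ} (hd : 1 ≤ d) (ha0 : 0 < a) (hr : 0 < r) :
    fRad d a (gFun d a r) r = r ^ (d:ℝ) * (1/d + (1 + r ^ 2)/a) := by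
  have hd0 : (d:ℝ) ≠ 0 := Nat.cast_ne_zero.mpr (by omega)
  have E' : (gFun d a r / a) * (1 + r ^ (-2:ℝ)) ^ (a/2) = r ^ (d:ℝ) * (1 + r ^ 2) / a := by
    rw [div_mul_eq_mul_div, gFun_mul hr]
  unfold fRad
  rw [E']
  field_simp

lemma ratio1_eq {d : ℕ} {a r : ℝ} (ha0 : 0 < a) (hr : 0 < r) :
    r / (gFun d a r) ^ (1/((d:ℝ)+a)) = (1 + r ^ 2) ^ (-((1-a/2)/((d:ℝ)+a))) := by
  have hb : (0:ℝ) < 1 + r ^ 2 := by positivity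
  have hp : ((d:ℝ)+a) ≠ 0 := by positivity
  have e1 : (gFun d a r) ^ (1/((d:ℝ)+a))
      = r * (1 + r ^ 2) ^ ((1-a/2)/((d:ℝ)+a)) := by
    rw [gFun, Real.mul_rpow (by positivity) (by positivity),
      ← Real.rpow_mul hr.le, ← Real.rpow_mul hb.le,
      show ((d:ℝ)+a) * (1/((d:ℝ)+a)) = 1 by field_simp, Real.rpow_one,
      show (1-a/2) * (1/((d:ℝ)+a)) = (1-a/2)/((d:ℝ)+a) by ring]
  rw [e1, Real.rpow_neg hb.le, div_mul_cancel_left₀ hr.ne']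

lemma ratio2_eq {d : ℕ} {a r : ℝ} (hd : 1 ≤ d) (ha0 : 0 < a) (hr : 0 < r) :
    fRad d a (gFun d a r) r / (gFun d a r) ^ ((d:ℝ)/((d:ℝ)+a))
      = (1/d + (1 + r ^ 2)/a) * (1 + r ^ 2) ^ (-((1-a/2)*((d:ℝ)/((d:ℝ)+a)))) := by
  have hb : (0:ℝ) < 1 + r ^ 2 := by positivity
  have hp : ((d:ℝ)+a) ≠ 0 := by positivity
  have e1 : (gFun d a r) ^ ((d:ℝ)/((d:ℝ)+a))
      = r ^ (d:ℝ) * (1 + r ^ 2) ^ ((1-a/2)*((d:ℝ)/((d:ℝ)+a))) := by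
    rw [gFun, Real.mul_rpow (by positivity) (by positivity),
      ← Real.rpow_mul hr.le, ← Real.rpow_mul hb.le,
      show ((d:ℝ)+a) * ((d:ℝ)/((d:ℝ)+a)) = (d:ℝ) by field_simp]
  rw [fRad_gFun hd ha0 hr, e1,
    mul_div_mul_left _ _ (by positivity : (r:ℝ) ^ (d:ℝ) ≠ 0),
    Real.rpow_neg hb.le, div_eq_mul_inv]

lemma ratio3_eq {d : ℕ} {a r : ℝ} (hd : 1 ≤ d) (ha0 : 0 < a) (hr : 0 < r) :
    fRad d a (gFun d a r) r / (gFun d a r / a)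
      = (a/(d:ℝ)) * ((1 + r ^ (-2:ℝ)) ^ (a/2) * (1 + r ^ 2)⁻¹) + (1 + r ^ (-2:ℝ)) ^ (a/2) := by
  have hd0 : (d:ℝ) ≠ 0 := Nat.cast_ne_zero.mpr (by omega)
  have hb : (0:ℝ) < 1 + r ^ 2 := by positivity
  have hg := gFun_pos (d := d) (a := a) hr
  have E := gFun_mul (d := d) (a := a) hr
  rw [fRad_gFun hd ha0 hr, div_div_eq_mul_div, div_eq_iff hg.ne']
  have hinv : (1 + r ^ 2) * (1 + r ^ 2)⁻¹ = 1 := mul_inv_cancel₀ hb.ne'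
  have ha' : a * a⁻¹ = 1 := mul_inv_cancel₀ ha0.ne'
  linear_combination (-(a/(d:ℝ)*(1+r^2)⁻¹ + 1)) * E + (-(a/(d:ℝ))*r^(d:ℝ)) * hinv
    + (r^(d:ℝ)*(1+r^2)) * ha'

end NashAux

open NashAux Set in
/-- For each `x > 0` the function `R ↦ f(x,R)` has a unique minimizer `R(x) > 0`, which
satisfies `R^{d+a}(1+R²)^{1-a/2} = x`; `x ↦ R(x)` is monotone increasing,
`R(x) = x^{1/(d+a)}(1+o(1))` as `x → 0⁺`, and the minimal value `φ(x) = f(x,R(x))` satisfies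
`φ(x) = (1/d + 1/a) x^{d/(d+a)}(1+o(1))` as `x → 0⁺` and `φ(x) = (x/a)(1+o(1))` as
`x → +∞`. -/
theorem minimization_of_nash_functional (d : ℕ) (hd : 1 ≤ d) (a : ℝ)
    (ha0 : 0 < a) (ha2 : a ≤ 2) :
    ∃ R : ℝ → ℝ,
      (∀ x, 0 < x → 0 < R x) ∧
      (∀ x, 0 < x → (R x) ^ ((d : ℝ) + a) * (1 + (R x) ^ 2) ^ (1 - a / 2) = x) ∧
      (∀ x, 0 < x → ∀ R', 0 < R' → R' ≠ R x → fRad d a x (R x) < fRad d a x R') ∧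
      MonotoneOn R (Set.Ioi 0) ∧
      Tendsto (fun x => R x / x ^ (1 / ((d : ℝ) + a))) (nhdsWithin 0 (Set.Ioi 0)) (nhds 1) ∧
      Tendsto (fun x => fRad d a x (R x) / x ^ ((d : ℝ) / ((d : ℝ) + a)))
        (nhdsWithin 0 (Set.Ioi 0)) (nhds (1 / d + 1 / a)) ∧
      Tendsto (fun x => fRad d a x (R x) / (x / a)) atTop (nhds 1) := by
  classical
  have hp : (0:ℝ) < (d:ℝ) + a := by positivity
  set R : ℝ → ℝ := fun x => if hx : 0 < x then (gFun_exists (d := d) ha0 ha2 x hx).choose else 1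
    with hRdef
  have hpos : ∀ x, 0 < x → 0 < R x := by
    intro x hx
    rw [hRdef]; simp only [dif_pos hx]
    exact (gFun_exists ha0 ha2 x hx).choose_spec.1
  have hval : ∀ x, 0 < x → gFun d a (R x) = x := by
    intro x hx
    rw [hRdef]; simp only [dif_pos hx]
    exact (gFun_exists ha0 ha2 x hx).choose_spec.2
  have hmono : MonotoneOn R (Set.Ioi 0) := by
    intro x hx y hy hxy
    by_contra h
    push_neg at h
    have := gFun_strictMonoOn (d := d) ha0 ha2 (mem_Ioi.mpr (hpos y hy)) (mem_Ioi.mpr (hpos x hx)) h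
    rw [hval x hx, hval y hy] at this
    linarith
  -- R tends to 0 within Ioi 0 as x → 0⁺
  have hRle : ∀ x, 0 < x → R x ≤ x ^ (1/((d:ℝ)+a)) := by
    intro x hx
    have h1 : (R x) ^ ((d:ℝ)+a) ≤ x :=
      le_of_le_of_eq (gFun_ge ha2 (hpos x hx)) (hval x hx)
    have h2 : ((R x) ^ ((d:ℝ)+a)) ^ (1/((d:ℝ)+a)) ≤ x ^ (1/((d:ℝ)+a)) :=
      Real.rpow_le_rpow (Real.rpow_nonneg (hpos x hx).le _) h1 (by positivity)
    rwa [← Real.rpow_mul (hpos x hx).le,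
      show ((d:ℝ)+a) * (1/((d:ℝ)+a)) = 1 by field_simp, Real.rpow_one] at h2
  have hR0 : Tendsto R (nhdsWithin 0 (Set.Ioi 0)) (nhds 0) := by
    have hub : Tendsto (fun x : ℝ => x ^ (1/((d:ℝ)+a))) (nhdsWithin 0 (Set.Ioi 0)) (nhds 0) := by
      have := (Real.continuousAt_rpow_const 0 (1/((d:ℝ)+a)) (Or.inr (by positivity))).tendsto
      rw [Real.zero_rpow (one_div_ne_zero hp.ne')] at this
      exact this.mono_left nhdsWithin_le_nhds
    apply tendsto_of_tendsto_of_tendsto_of_le_of_le' tendsto_const_nhds hub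
    · filter_upwards [self_mem_nhdsWithin] with x hx using (hpos x hx).le
    · filter_upwards [self_mem_nhdsWithin] with x hx using hRle x hx
  -- R tends to ∞ as x → ∞
  have hRtop : Tendsto R atTop atTop := by
    rw [tendsto_atTop]
    intro M
    filter_upwards [eventually_ge_atTop (gFun d a (max M 1) + 1)] with x hx
    by_contra h
    push_neg at h
    have hM1 : (0:ℝ) < max M 1 := lt_of_lt_of_le one_pos (le_max_right _ _)
    have hx0 : 0 < x :=
      lt_of_lt_of_le (add_pos (gFun_pos (d := d) (a := a) hM1) one_pos) hx
    have : gFun d a (R x) ≤ gFun d a (max M 1) := by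
      rcases eq_or_lt_of_le (le_of_lt (lt_of_lt_of_le h (le_max_left M 1))) with he | hlt
      · rw [he]
      · exact (gFun_strictMonoOn (d := d) ha0 ha2 (mem_Ioi.mpr (hpos x hx0))
          (mem_Ioi.mpr hM1) hlt).le
    rw [hval x hx0] at this
    linarith
  refine ⟨R, hpos, fun x hx => hval x hx, ?_, hmono, ?_, ?_, ?_⟩
  · intro x hx
    exact fRad_min hd ha0 ha2 hx (hpos x hx) (hval x hx)
  · -- limit 1
    have hcont : ContinuousAt (fun r : ℝ => (1 + r ^ 2) ^ (-((1-a/2)/((d:ℝ)+a)))) 0 := by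
      apply ContinuousAt.rpow_const (by fun_prop)
      left; norm_num
    have hcomp := hcont.tendsto.comp hR0
    have h0 : ((1:ℝ) + (0:ℝ) ^ 2) ^ (-((1-a/2)/((d:ℝ)+a))) = 1 := by
      norm_num
    rw [h0] at hcomp
    apply hcomp.congr'
    filter_upwards [self_mem_nhdsWithin] with x hx
    have := ratio1_eq (d := d) ha0 (hpos x hx)
    rw [hval x hx] at this
    exact this.symm
  · -- limit 2
    have hcont : ContinuousAt
        (fun r : ℝ => (1/(d:ℝ) + (1 + r ^ 2)/a) * (1 + r ^ 2) ^ (-((1-a/2)*((d:ℝ)/((d:ℝ)+a))))) 0 := by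
      apply ContinuousAt.mul (by fun_prop)
      apply ContinuousAt.rpow_const (by fun_prop)
      left; norm_num
    have hcomp := hcont.tendsto.comp hR0
    have h0 : (1/(d:ℝ) + (1 + (0:ℝ) ^ 2)/a) * ((1:ℝ) + (0:ℝ) ^ 2) ^ (-((1-a/2)*((d:ℝ)/((d:ℝ)+a))))
        = 1/(d:ℝ) + 1/a := by
      norm_num
    rw [h0] at hcomp
    apply hcomp.congr'
    filter_upwards [self_mem_nhdsWithin] with x hx
    have := ratio2_eq (d := d) hd ha0 (hpos x hx)
    rw [hval x hx] at this
    exact this.symm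
  · -- limit 3
    have t1 : Tendsto (fun r : ℝ => (1 + r ^ (-2:ℝ)) ^ (a/2)) atTop (nhds 1) := by
      have hin : Tendsto (fun r : ℝ => 1 + r ^ (-2:ℝ)) atTop (nhds 1) := by
        have := tendsto_rpow_neg_atTop (y := 2) two_pos
        have h := this.const_add (1:ℝ)
        simpa using h
      have hc : ContinuousAt (fun u : ℝ => u ^ (a/2)) 1 :=
        Real.continuousAt_rpow_const 1 (a/2) (Or.inl one_ne_zero)
      have := hc.tendsto.comp hin
      simpa [Real.one_rpow, Function.comp_def] using this
    have t2 : Tendsto (fun r : ℝ => (1 + r ^ 2)⁻¹) atTop (nhds 0) := by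
      apply Tendsto.inv_tendsto_atTop
      apply tendsto_atTop_add_const_left
      exact tendsto_pow_atTop two_ne_zero
    have tall : Tendsto (fun r : ℝ =>
        (a/(d:ℝ)) * ((1 + r ^ (-2:ℝ)) ^ (a/2) * (1 + r ^ 2)⁻¹) + (1 + r ^ (-2:ℝ)) ^ (a/2))
        atTop (nhds 1) := by
      have := ((t1.mul t2).const_mul (a/(d:ℝ))).add t1
      simpa using this
    have hcomp := tall.comp hRtop
    apply hcomp.congr'
    filter_upwards [eventually_gt_atTop 0] with x hx
    have := ratio3_eq (d := d) hd ha0 (hpos x hx)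
    rw [hval x hx] at this
    exact this.symm
end

section
/- Let F(v) = c_γ ⟨v⟩^{-(d+γ)} with γ > 0, and let b(v,v') be a nonnegative collision kernel satisfying b(v,v') ≥ Z^{-1} ⟨v⟩^{-β} ⟨v'⟩^{-β} for some Z > 0 and ∫ (b(v,v') - b(v',v)) F(v') dv' = 0 for all v. Then for every h ∈ L²(F dv), ∬ b(v,v') (h(v) - h(v'))² F(v) F(v') dv dv' ≥ Λ ∫ |h(v) - h̄_{-β}|² ⟨v⟩^{-β} F(v) dv, where Λ = (2/Z) ∫ ⟨v⟩^{-β} F dv and h̄_{-β} = (∫ h ⟨v⟩^{-β} F dv)/(∫ ⟨v⟩^{-β} F dv). -/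
open MeasureTheory
open scoped ENNReal

/-- `⟨v⟩ = √(1+|v|²)`. -/
noncomputable def jap {d : ℕ} (v : EuclideanSpace ℝ (Fin d)) : ℝ :=
  Real.sqrt (1 + ‖v‖ ^ 2)

lemma gap_aux {α : Type*} [MeasurableSpace α] {μ : Measure α}
    (W : α → ℝ) (hWm : Measurable W) (hWpos : ∀ v, 0 < W v)
    (hWint : Integrable W μ) (hμ : μ Set.univ ≠ 0)
    (h : α → ℝ) (hh : AEStronglyMeasurable h μ)
    (hhW : Integrable (fun v => h v * W v) μ) :
    ENNReal.ofReal (2 * ∫ v, W v ∂μ) *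
      ∫⁻ v, ENNReal.ofReal ((h v - (∫ v, h v * W v ∂μ) / (∫ v, W v ∂μ)) ^ 2 * W v) ∂μ
      ≤ ∫⁻ v, ∫⁻ v', ENNReal.ofReal (W v * W v' * (h v - h v') ^ 2) ∂μ ∂μ := by
  set m : ℝ := ∫ v, W v ∂μ with hmdef
  have hmpos : 0 < m := by
    rw [hmdef, integral_pos_iff_support_of_nonneg (fun v => (hWpos v).le) hWint]
    have hsup : Function.support W = Set.univ := Set.eq_univ_of_forall fun v => (hWpos v).ne'
    rw [hsup]
    exact pos_iff_ne_zero.mpr hμ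
  set hbar : ℝ := (∫ v, h v * W v ∂μ) / m with hbardef
  have hgW : Integrable (fun v => (h v - hbar) * W v) μ := by
    refine (hhW.sub (hWint.const_mul hbar)).congr
      (Filter.Eventually.of_forall fun v => ?_)
    simp only [Pi.sub_apply]
    ring
  have hgW0 : ∫ v, (h v - hbar) * W v ∂μ = 0 := by
    have e1 : ∫ v, (h v - hbar) * W v ∂μ
        = (∫ v, h v * W v ∂μ) - ∫ v, hbar * W v ∂μ := by
      rw [← integral_sub hhW (hWint.const_mul hbar)]
      exact integral_congr_ae (Filter.Eventually.of_forall fun v => by ring)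
    rw [e1, integral_const_mul, hbardef, div_mul_cancel₀ _ hmpos.ne']
    ring
  set J : ℝ≥0∞ := ∫⁻ v, ENNReal.ofReal ((h v - hbar) ^ 2 * W v) ∂μ with hJdef
  by_cases hJtop : J = ⊤
  · -- the weighted L² norm is infinite; show the RHS is infinite too
    have inner_top : ∀ v, (∫⁻ v', ENNReal.ofReal (W v * W v' * (h v - h v') ^ 2) ∂μ) = ⊤ := by
      intro v
      have h1 : ∀ v', ENNReal.ofReal (W v * W v' * (h v - h v') ^ 2)
          = ENNReal.ofReal (W v) * ENNReal.ofReal (W v' * (h v - h v') ^ 2) := fun v' => by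
        rw [← ENNReal.ofReal_mul (hWpos v).le, mul_assoc]
      rw [lintegral_congr h1, lintegral_const_mul' _ _ ENNReal.ofReal_ne_top]
      have h2 : (∫⁻ v', ENNReal.ofReal (W v' * (h v - h v') ^ 2) ∂μ) = ⊤ := by
        refine top_le_iff.mp ?_
        have hsub : ∀ v', ENNReal.ofReal ((1/2) * ((h v' - hbar) ^ 2 * W v'))
            - ENNReal.ofReal ((h v - hbar) ^ 2 * W v')
            ≤ ENNReal.ofReal (W v' * (h v - h v') ^ 2) := by
          intro v'
          rw [← ENNReal.ofReal_sub _ (mul_nonneg (sq_nonneg _) (hWpos v').le)]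
          apply ENNReal.ofReal_le_ofReal
          nlinarith [mul_nonneg (hWpos v').le (sq_nonneg ((h v' - hbar) - 2 * (h v - hbar)))]
        have e3 := lintegral_sub_le' (fun v' => ENNReal.ofReal ((h v - hbar) ^ 2 * W v'))
          (fun v' => ENNReal.ofReal ((1/2) * ((h v' - hbar) ^ 2 * W v'))) (μ := μ)
          (ENNReal.measurable_ofReal.comp (hWm.const_mul _)).aemeasurable
        have e1 : (∫⁻ v', ENNReal.ofReal ((1/2) * ((h v' - hbar) ^ 2 * W v')) ∂μ)
            = ENNReal.ofReal (1/2) * J := by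
          rw [hJdef, ← lintegral_const_mul' _ _ ENNReal.ofReal_ne_top]
          exact lintegral_congr fun v' => ENNReal.ofReal_mul (by norm_num)
        have e2 : (∫⁻ v', ENNReal.ofReal ((h v - hbar) ^ 2 * W v') ∂μ)
            = ENNReal.ofReal ((h v - hbar) ^ 2) * ENNReal.ofReal m := by
          rw [← ofReal_integral_eq_lintegral_ofReal (hWint.const_mul _)
            (Filter.Eventually.of_forall fun v' => mul_nonneg (sq_nonneg _) (hWpos v').le),
            integral_const_mul, ENNReal.ofReal_mul (sq_nonneg _), ← hmdef]
        calc (⊤ : ℝ≥0∞)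
            = ENNReal.ofReal (1/2) * J
              - ENNReal.ofReal ((h v - hbar) ^ 2) * ENNReal.ofReal m := by
              rw [hJtop, ENNReal.mul_top (by norm_num), ENNReal.top_sub
                (ENNReal.mul_ne_top ENNReal.ofReal_ne_top ENNReal.ofReal_ne_top)]
          _ = (∫⁻ v', ENNReal.ofReal ((1/2) * ((h v' - hbar) ^ 2 * W v')) ∂μ)
              - ∫⁻ v', ENNReal.ofReal ((h v - hbar) ^ 2 * W v') ∂μ := by rw [e1, e2]
          _ ≤ ∫⁻ v', (ENNReal.ofReal ((1/2) * ((h v' - hbar) ^ 2 * W v'))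
              - ENNReal.ofReal ((h v - hbar) ^ 2 * W v')) ∂μ := e3
          _ ≤ ∫⁻ v', ENNReal.ofReal (W v' * (h v - h v') ^ 2) ∂μ := lintegral_mono hsub
      rw [h2, ENNReal.mul_top (ENNReal.ofReal_pos.mpr (hWpos v)).ne']
    have hBtop : (∫⁻ v, ∫⁻ v', ENNReal.ofReal (W v * W v' * (h v - h v') ^ 2) ∂μ ∂μ) = ⊤ := by
      rw [lintegral_congr inner_top, lintegral_const, ENNReal.top_mul hμ]
    rw [hBtop]
    exact le_top
  · -- finite case: compute both sides exactly
    have hgm : AEStronglyMeasurable (fun v => h v - hbar) μ := hh.sub aestronglyMeasurable_const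
    have hg2W : Integrable (fun v => (h v - hbar) ^ 2 * W v) μ := by
      constructor
      · exact ((hgm.mul hgm).mul hWm.aestronglyMeasurable).congr
          (Filter.Eventually.of_forall fun v => by simp only [Pi.mul_apply]; ring)
      · rw [hasFiniteIntegral_iff_ofReal
          (Filter.Eventually.of_forall fun v => mul_nonneg (sq_nonneg _) (hWpos v).le)]
        exact Ne.lt_top hJtop
    set K : ℝ := ∫ v, (h v - hbar) ^ 2 * W v ∂μ with hKdef
    have hKnn : 0 ≤ K := integral_nonneg fun v => mul_nonneg (sq_nonneg _) (hWpos v).le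
    have hinner : ∀ v, (∫⁻ v', ENNReal.ofReal (W v * W v' * (h v - h v') ^ 2) ∂μ)
        = ENNReal.ofReal (W v * ((h v - hbar) ^ 2 * m + K)) := by
      intro v
      have i1 : Integrable (fun v' => (W v * (h v - hbar) ^ 2) * W v') μ :=
        hWint.const_mul _
      have i2 : Integrable (fun v' => (-2 * W v * (h v - hbar)) * ((h v' - hbar) * W v')) μ :=
        hgW.const_mul _
      have i3 : Integrable (fun v' => (W v) * ((h v' - hbar) ^ 2 * W v')) μ :=
        hg2W.const_mul _
      have i12 : Integrable (fun v' => (W v * (h v - hbar) ^ 2) * W v'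
          + (-2 * W v * (h v - hbar)) * ((h v' - hbar) * W v')) μ := i1.add i2
      have hint1 : Integrable (fun v' => W v * W v' * (h v - h v') ^ 2) μ := by
        refine (i12.add i3).congr (Filter.Eventually.of_forall fun v' => ?_)
        simp only [Pi.add_apply]
        ring
      have hval : (∫ v', W v * W v' * (h v - h v') ^ 2 ∂μ)
          = W v * ((h v - hbar) ^ 2 * m + K) := by
        have e0 : (∫ v', W v * W v' * (h v - h v') ^ 2 ∂μ)
            = ∫ v', ((W v * (h v - hbar) ^ 2) * W v'
              + (-2 * W v * (h v - hbar)) * ((h v' - hbar) * W v')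
              + (W v) * ((h v' - hbar) ^ 2 * W v')) ∂μ :=
          integral_congr_ae (Filter.Eventually.of_forall fun v' => by ring)
        rw [e0, integral_add i12 i3, integral_add i1 i2,
          integral_const_mul, integral_const_mul, integral_const_mul, hgW0, ← hmdef, ← hKdef]
        ring
      rw [← ofReal_integral_eq_lintegral_ofReal hint1
        (Filter.Eventually.of_forall fun v' =>
          mul_nonneg (mul_nonneg (hWpos v).le (hWpos v').le) (sq_nonneg _)), hval]
    have hB : (∫⁻ v, ∫⁻ v', ENNReal.ofReal (W v * W v' * (h v - h v') ^ 2) ∂μ ∂μ)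
        = ENNReal.ofReal (m * K + K * m) := by
      rw [lintegral_congr hinner]
      have j1 : Integrable (fun v => m * ((h v - hbar) ^ 2 * W v)) μ := hg2W.const_mul m
      have j2 : Integrable (fun v => K * W v) μ := hWint.const_mul K
      have hint2 : Integrable (fun v => W v * ((h v - hbar) ^ 2 * m + K)) μ := by
        refine (j1.add j2).congr (Filter.Eventually.of_forall fun v => ?_)
        simp only [Pi.add_apply]
        ring
      rw [← ofReal_integral_eq_lintegral_ofReal hint2
        (Filter.Eventually.of_forall fun v => mul_nonneg (hWpos v).le
          (add_nonneg (mul_nonneg (sq_nonneg _) hmpos.le) hKnn))]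
      congr 1
      rw [integral_congr_ae (Filter.Eventually.of_forall fun v =>
        (by ring : W v * ((h v - hbar) ^ 2 * m + K)
          = m * ((h v - hbar) ^ 2 * W v) + K * W v)),
        integral_add j1 j2,
        integral_const_mul, integral_const_mul, ← hmdef, ← hKdef]
    have hJK : J = ENNReal.ofReal K :=
      (ofReal_integral_eq_lintegral_ofReal hg2W
        (Filter.Eventually.of_forall fun v => mul_nonneg (sq_nonneg _) (hWpos v).le)).symm
    rw [hB, hJK, ← ENNReal.ofReal_mul (by positivity)]
    exact ENNReal.ofReal_le_ofReal (le_of_eq (by ring))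
/-- Spectral-gap inequality for the scattering operator: if `b(v,v') ≥ Z⁻¹⟨v⟩^{-β}⟨v'⟩^{-β}`
and local mass conservation holds, then
`∬ b (h-h')² F F' ≥ Λ ∫ |h - h̄_{-β}|² ⟨v⟩^{-β} F` with `Λ = (2/Z)∫⟨v⟩^{-β}F`. -/
theorem scattering_gap (d : ℕ) (hd : 1 ≤ d) (γ β Z : ℝ) (hγ : 0 < γ) (hγβ : 0 < γ + β)
    (hZ : 0 < Z) (cγ : ℝ)
    (hc : cγ = Real.pi ^ (-(d : ℝ) / 2) * Real.Gamma (((d : ℝ) + γ) / 2) / Real.Gamma (γ / 2))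
    (F : EuclideanSpace ℝ (Fin d) → ℝ)
    (hF : ∀ v, F v = cγ * jap v ^ (-((d : ℝ) + γ)))
    (b : EuclideanSpace ℝ (Fin d) → EuclideanSpace ℝ (Fin d) → ℝ)
    (hb0 : ∀ v v', 0 ≤ b v v')
    (hblow : ∀ v v', Z⁻¹ * (jap v ^ (-β) * jap v' ^ (-β)) ≤ b v v')
    (hmass : ∀ v, (∫ v', (b v v' - b v' v) * F v') = 0)
    (h : EuclideanSpace ℝ (Fin d) → ℝ)
    (hL2 : Integrable (fun v => h v ^ 2 * F v))
    (hL1w : Integrable (fun v => h v * jap v ^ (-β) * F v)) :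
    ENNReal.ofReal ((2 / Z) * ∫ v, jap v ^ (-β) * F v) *
        ∫⁻ v, ENNReal.ofReal
          ((h v - (∫ w, h w * jap w ^ (-β) * F w) / (∫ w, jap w ^ (-β) * F w)) ^ 2
            * jap v ^ (-β) * F v)
      ≤ ∫⁻ v, ∫⁻ v', ENNReal.ofReal (b v v' * (h v - h v') ^ 2 * F v * F v') := by
  have hjap : ∀ v : EuclideanSpace ℝ (Fin d), 0 < jap v := fun v =>
    Real.sqrt_pos.mpr (by positivity)
  have hcγ : 0 < cγ := by
    rw [hc]
    have h1 : 0 < Real.Gamma (((d : ℝ) + γ) / 2) := Real.Gamma_pos_of_pos (by positivity)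
    have h2 : 0 < Real.Gamma (γ / 2) := Real.Gamma_pos_of_pos (by positivity)
    have h3 : (0 : ℝ) < Real.pi ^ (-(d : ℝ) / 2) := Real.rpow_pos_of_pos Real.pi_pos _
    positivity
  have hFpos : ∀ v, 0 < F v := fun v => by
    rw [hF]; exact mul_pos hcγ (Real.rpow_pos_of_pos (hjap v) _)
  have hWpos : ∀ v : EuclideanSpace ℝ (Fin d), 0 < jap v ^ (-β) * F v := fun v =>
    mul_pos (Real.rpow_pos_of_pos (hjap v) _) (hFpos v)
  have hjapc : Continuous (jap (d := d)) := by
    unfold jap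
    exact Real.continuous_sqrt.comp (continuous_const.add (continuous_norm.pow 2))
  have hjapm : ∀ s : ℝ, Measurable fun v : EuclideanSpace ℝ (Fin d) => jap v ^ s := fun s =>
    (hjapc.rpow_const fun v => Or.inl (hjap v).ne').measurable
  have hFmeas : Measurable F := by
    have hFc : Continuous F := by
      have : F = fun v => cγ * jap v ^ (-((d : ℝ) + γ)) := funext hF
      rw [this]
      exact continuous_const.mul (hjapc.rpow_const fun v => Or.inl (hjap v).ne')
    exact hFc.measurable
  have hWm : Measurable fun v : EuclideanSpace ℝ (Fin d) => jap v ^ (-β) * F v :=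
    (hjapm _).mul hFmeas
  have hWint : Integrable (fun v : EuclideanSpace ℝ (Fin d) => jap v ^ (-β) * F v) := by
    have hs : ((d : ℝ)) < (d : ℝ) + γ + β := by linarith
    have hint := integrable_rpow_neg_one_add_norm_sq (E := EuclideanSpace ℝ (Fin d))
      (μ := volume) (r := (d : ℝ) + γ + β) (by rw [finrank_euclideanSpace_fin]; exact hs)
    refine (hint.const_mul cγ).congr (Filter.Eventually.of_forall fun v => ?_)
    show cγ * (1 + ‖v‖ ^ 2 : ℝ) ^ (-((d : ℝ) + γ + β) / 2) = jap v ^ (-β) * F v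
    have e1 : (1 + ‖v‖ ^ 2 : ℝ) ^ (-((d : ℝ) + γ + β) / 2)
        = jap v ^ (-((d : ℝ) + γ + β)) := by
      rw [show (-((d : ℝ) + γ + β) / 2 : ℝ) = (-((d : ℝ) + γ + β)) / 2 by ring,
        Real.rpow_div_two_eq_sqrt _ (by positivity)]
      rfl
    rw [e1, hF v, show (-((d : ℝ) + γ + β)) = (-β) + (-((d : ℝ) + γ)) by ring,
      Real.rpow_add (hjap v)]
    ring
  have hμ : (volume : Measure (EuclideanSpace ℝ (Fin d))) Set.univ ≠ 0 :=
    (isOpen_univ.measure_pos volume ⟨0, trivial⟩).ne'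
  have hhW : Integrable (fun v => h v * (jap v ^ (-β) * F v)) :=
    hL1w.congr (Filter.Eventually.of_forall fun v => mul_assoc _ _ _)
  have hh : AEStronglyMeasurable h (volume : Measure (EuclideanSpace ℝ (Fin d))) := by
    have h1 := hhW.aestronglyMeasurable
    have h2 := h1.mul (hWm.inv).aestronglyMeasurable
    refine h2.congr (Filter.Eventually.of_forall fun v => ?_)
    exact mul_inv_cancel_right₀ (hWpos v).ne' _
  have key := gap_aux (μ := volume) (fun v : EuclideanSpace ℝ (Fin d) => jap v ^ (-β) * F v)
    hWm hWpos hWint hμ h hh hhW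
  -- rewrite the goal in the canonical form
  have hIassoc : (∫ w, h w * jap w ^ (-β) * F w)
      = ∫ v, h v * (jap v ^ (-β) * F v) :=
    integral_congr_ae (Filter.Eventually.of_forall fun v => mul_assoc _ _ _)
  rw [hIassoc]
  have hJassoc : (∫⁻ v, ENNReal.ofReal
        ((h v - (∫ v, h v * (jap v ^ (-β) * F v)) / (∫ v, jap v ^ (-β) * F v)) ^ 2
          * jap v ^ (-β) * F v))
      = ∫⁻ v, ENNReal.ofReal
        ((h v - (∫ v, h v * (jap v ^ (-β) * F v)) / (∫ v, jap v ^ (-β) * F v)) ^ 2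
          * (jap v ^ (-β) * F v)) :=
    lintegral_congr fun v => by rw [mul_assoc]
  rw [hJassoc]
  have hconst : ENNReal.ofReal ((2 / Z) * ∫ v, jap v ^ (-β) * F v)
      = ENNReal.ofReal Z⁻¹ * ENNReal.ofReal (2 * ∫ v, jap v ^ (-β) * F v) := by
    rw [← ENNReal.ofReal_mul (by positivity)]
    congr 1
    ring
  rw [hconst, mul_assoc]
  calc ENNReal.ofReal Z⁻¹ * (ENNReal.ofReal (2 * ∫ v, jap v ^ (-β) * F v) *
        ∫⁻ v, ENNReal.ofReal
          ((h v - (∫ v, h v * (jap v ^ (-β) * F v)) / (∫ v, jap v ^ (-β) * F v)) ^ 2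
            * (jap v ^ (-β) * F v)))
      ≤ ENNReal.ofReal Z⁻¹ * ∫⁻ v, ∫⁻ v', ENNReal.ofReal
          ((jap v ^ (-β) * F v) * (jap v' ^ (-β) * F v') * (h v - h v') ^ 2) :=
        mul_le_mul_right key _
    _ = ∫⁻ v, ∫⁻ v', ENNReal.ofReal
          (Z⁻¹ * ((jap v ^ (-β) * F v) * (jap v' ^ (-β) * F v') * (h v - h v') ^ 2)) := by
        rw [← lintegral_const_mul' _ _ ENNReal.ofReal_ne_top]
        refine lintegral_congr fun v => ?_
        rw [← lintegral_const_mul' _ _ ENNReal.ofReal_ne_top]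
        refine lintegral_congr fun v' => ?_
        rw [← ENNReal.ofReal_mul (by positivity)]
    _ ≤ ∫⁻ v, ∫⁻ v', ENNReal.ofReal (b v v' * (h v - h v') ^ 2 * F v * F v') := by
        refine lintegral_mono fun v => lintegral_mono fun v' => ?_
        apply ENNReal.ofReal_le_ofReal
        calc Z⁻¹ * ((jap v ^ (-β) * F v) * (jap v' ^ (-β) * F v') * (h v - h v') ^ 2)
            = (Z⁻¹ * (jap v ^ (-β) * jap v' ^ (-β)))
              * ((h v - h v') ^ 2 * F v * F v') := by ring
          _ ≤ b v v' * ((h v - h v') ^ 2 * F v * F v') := by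
              refine mul_le_mul_of_nonneg_right (hblow v v') ?_
              have := (hFpos v).le
              have := (hFpos v').le
              positivity
          _ = b v v' * (h v - h v') ^ 2 * F v * F v' := by ring
end

section
/- Let d ≥ 1, γ > 0 and F(v) = c_γ ⟨v⟩^{-(d+γ)}. For the Fokker-Planck operator L₁ f = ∇_v · (F ∇_v (F^{-1} f)), one has the explicit identity: F^{-1} L₁(F ⟨·⟩^k)(v) = k (d + γ - k + 2) ⟨v⟩^{k-4} - k (γ + 2 - k) ⟨v⟩^{k-2} for all v ∈ ℝ^d. Consequently, for any k ∈ (0, γ+2), there exist a ∈ ℝ, b > 0, R > 0 such that F^{-1} L₁(F ⟨·⟩^k)(v) ≤ (a 1_{B_R}(v) - b ⟨v⟩^{-2}) ⟨v⟩^k for all v. -/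
open MeasureTheory

/-- The divergence of a vector field on `ℝ^d`. -/
noncomputable def diverg {d : ℕ} (G : EuclideanSpace ℝ (Fin d) → EuclideanSpace ℝ (Fin d))
    (v : EuclideanSpace ℝ (Fin d)) : ℝ :=
  ∑ i : Fin d, fderiv ℝ (fun w => G w i) v (EuclideanSpace.single i 1)

section Aux
variable {d : ℕ}

lemma jap_pos (v : EuclideanSpace ℝ (Fin d)) : 0 < jap v := by
  unfold jap; positivity

lemma one_le_jap (v : EuclideanSpace ℝ (Fin d)) : 1 ≤ jap v := by
  have h2 : jap v ^ 2 = 1 + ‖v‖ ^ 2 := by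
    rw [jap]; exact Real.sq_sqrt (by positivity)
  nlinarith [h2, (jap_pos v).le, sq_nonneg ‖v‖]

lemma jap_sq (v : EuclideanSpace ℝ (Fin d)) : jap v ^ (2:ℝ) = 1 + ‖v‖ ^ 2 := by
  rw [jap, Real.rpow_two, Real.sq_sqrt (by positivity)]

lemma jap_rpow (v : EuclideanSpace ℝ (Fin d)) (p : ℝ) :
    jap v ^ p = (1 + ‖v‖ ^ 2) ^ (p / 2) := by
  rw [jap, Real.sqrt_eq_rpow, ← Real.rpow_mul (by positivity)]
  ring_nf

lemma hasFDerivAt_jap_rpow (p : ℝ) (v : EuclideanSpace ℝ (Fin d)) :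
    HasFDerivAt (fun z : EuclideanSpace ℝ (Fin d) => jap z ^ p)
      ((p * jap v ^ (p - 2)) • (innerSL ℝ v)) v := by
  have hsq : HasFDerivAt (fun z : EuclideanSpace ℝ (Fin d) => 1 + ‖z‖ ^ 2)
      (2 • (innerSL ℝ v)) v := by
    simpa using ((hasFDerivAt_id v).norm_sq).const_add 1
  have hpos : (0:ℝ) < 1 + ‖v‖ ^ 2 := by positivity
  have hr : HasDerivAt (fun x : ℝ => x ^ (p/2)) ((p/2) * (1+‖v‖^2) ^ (p/2 - 1)) (1+‖v‖^2) :=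
    Real.hasDerivAt_rpow_const (Or.inl hpos.ne')
  have h := hr.comp_hasFDerivAt v hsq
  simp only [jap_rpow]
  refine h.congr_fderiv ?_
  ext w
  simp only [ContinuousLinearMap.smul_apply, innerSL_apply_apply, smul_eq_mul,
    jap_rpow, ContinuousLinearMap.coe_smul', Pi.smul_apply, nsmul_eq_mul]
  rw [show (p-2)/2 = p/2-1 by ring]
  ring

lemma gradient_jap_rpow (p : ℝ) (v : EuclideanSpace ℝ (Fin d)) :
    gradient (fun z : EuclideanSpace ℝ (Fin d) => jap z ^ p) v
      = (p * jap v ^ (p - 2)) • v := by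
  apply HasGradientAt.gradient
  rw [hasGradientAt_iff_hasFDerivAt]
  refine (hasFDerivAt_jap_rpow p v).congr_fderiv ?_
  ext w
  simp [InnerProductSpace.toDual_apply_apply, innerSL_apply_apply, real_inner_smul_left]

lemma sum_coord_sq (v : EuclideanSpace ℝ (Fin d)) : ∑ i : Fin d, v i ^ 2 = ‖v‖ ^ 2 := by
  rw [EuclideanSpace.norm_eq, Real.sq_sqrt (by positivity)]
  simp [sq_abs]

lemma diverg_smul_id (c p : ℝ) (v : EuclideanSpace ℝ (Fin d)) :
    diverg (fun w => (c * jap w ^ p) • w) v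
      = d * (c * jap v ^ p) + c * p * jap v ^ (p - 2) * ‖v‖ ^ 2 := by
  have hkey : ∀ i : Fin d,
      fderiv ℝ (fun w : EuclideanSpace ℝ (Fin d) => ((c * jap w ^ p) • w) i) v
          (EuclideanSpace.single i 1)
        = (c * jap v ^ p) + c * p * jap v ^ (p - 2) * (v i) ^ 2 := by
    intro i
    have hc : HasFDerivAt (fun w : EuclideanSpace ℝ (Fin d) => c * jap w ^ p)
        (c • ((p * jap v ^ (p - 2)) • (innerSL ℝ v))) v :=
      (hasFDerivAt_jap_rpow p v).const_mul c
    have hproj : HasFDerivAt (fun w : EuclideanSpace ℝ (Fin d) => w i)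
        (EuclideanSpace.proj (𝕜 := ℝ) i) v := (EuclideanSpace.proj (𝕜 := ℝ) i).hasFDerivAt
    have hmul : HasFDerivAt (fun w : EuclideanSpace ℝ (Fin d) => c * jap w ^ p * w i) _ v :=
      hc.mul hproj
    have heq : (fun w : EuclideanSpace ℝ (Fin d) => ((c * jap w ^ p) • w) i)
        = fun w : EuclideanSpace ℝ (Fin d) => (c * jap w ^ p) * w i := by
      funext w; simp
    rw [heq, hmul.fderiv]
    simp [EuclideanSpace.inner_single_right, real_inner_smul_left,
      EuclideanSpace.single_apply]
    ring
  rw [diverg]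
  simp only [hkey]
  rw [Finset.sum_add_distrib, Finset.sum_const, ← Finset.mul_sum, sum_coord_sq]
  simp [nsmul_eq_mul]

lemma main_identity (γ : ℝ) (cγ : ℝ) (hcγ : cγ ≠ 0) (k : ℝ) (v : EuclideanSpace ℝ (Fin d))
    (F : EuclideanSpace ℝ (Fin d) → ℝ)
    (hF : ∀ v, F v = cγ * jap v ^ (-((d : ℝ) + γ))) :
    (F v)⁻¹ * diverg (fun w => F w • gradient (fun z => jap z ^ k) w) v
      = k * ((d : ℝ) + γ - k + 2) * jap v ^ (k - 4) - k * (γ + 2 - k) * jap v ^ (k - 2) := by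
  have hs := jap_pos v
  have hfun : (fun w : EuclideanSpace ℝ (Fin d) => F w • gradient (fun z => jap z ^ k) w)
      = fun w => ((cγ * k) * jap w ^ (k - 2 + -((d:ℝ) + γ))) • w := by
    funext w
    rw [hF, gradient_jap_rpow, smul_smul, Real.rpow_add (jap_pos w)]
    ring_nf
  have e1 : jap v ^ (k - 2 + -((d:ℝ) + γ))
      = jap v ^ (k - 4) * jap v ^ (2:ℝ) * jap v ^ (-((d:ℝ) + γ)) := by
    rw [← Real.rpow_add hs, ← Real.rpow_add hs]; congr 1; ring
  have e2 : jap v ^ (k - 2 + -((d:ℝ) + γ) - 2)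
      = jap v ^ (k - 4) * jap v ^ (-((d:ℝ) + γ)) := by
    rw [← Real.rpow_add hs]; congr 1; ring
  have e3 : jap v ^ (k - 2) = jap v ^ (k - 4) * jap v ^ (2:ℝ) := by
    rw [← Real.rpow_add hs]; congr 1; ring
  have e5 : ‖v‖ ^ 2 = jap v ^ (2:ℝ) - 1 := by rw [jap_sq]; ring
  rw [hfun, diverg_smul_id, hF, e1, e2, e3, e5]
  have hC : jap v ^ (-((d:ℝ) + γ)) ≠ 0 := (Real.rpow_pos_of_pos hs _).ne'
  field_simp
  ring

end Aux

/-- For the Fokker–Planck operator `L₁ f = ∇·(F ∇(F⁻¹ f))` with `F = c_γ⟨v⟩^{-(d+γ)}`: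
`F⁻¹ L₁(F⟨·⟩^k)(v) = k(d+γ-k+2)⟨v⟩^{k-4} - k(γ+2-k)⟨v⟩^{k-2}`, and consequently for any
`k ∈ (0,γ+2)` there are `a ∈ ℝ`, `b > 0`, `R > 0` with
`F⁻¹ L₁(F⟨·⟩^k)(v) ≤ (a 1_{B_R}(v) - b⟨v⟩^{-2})⟨v⟩^k`. -/
theorem fokker_planck_lyapunov (d : ℕ) (hd : 1 ≤ d) (γ : ℝ) (hγ : 0 < γ) (cγ : ℝ)
    (hc : cγ = Real.pi ^ (-(d : ℝ) / 2) * Real.Gamma (((d : ℝ) + γ) / 2) / Real.Gamma (γ / 2))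
    (F : EuclideanSpace ℝ (Fin d) → ℝ)
    (hF : ∀ v, F v = cγ * jap v ^ (-((d : ℝ) + γ))) :
    (∀ k : ℝ, ∀ v,
      (F v)⁻¹ * diverg (fun w => F w • gradient (fun z => jap z ^ k) w) v
        = k * ((d : ℝ) + γ - k + 2) * jap v ^ (k - 4) - k * (γ + 2 - k) * jap v ^ (k - 2)) ∧
    (∀ k : ℝ, 0 < k → k < γ + 2 → ∃ a b R : ℝ, 0 < b ∧ 0 < R ∧ ∀ v,
      (F v)⁻¹ * diverg (fun w => F w • gradient (fun z => jap z ^ k) w) v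
        ≤ (a * (Metric.ball (0 : EuclideanSpace ℝ (Fin d)) R).indicator (fun _ => (1 : ℝ)) v
            - b * jap v ^ (-2 : ℝ)) * jap v ^ k) := by
  have hd1 : (1:ℝ) ≤ d := by exact_mod_cast hd
  have hcγ : 0 < cγ := by
    rw [hc]
    exact div_pos (mul_pos (Real.rpow_pos_of_pos Real.pi_pos _)
      (Real.Gamma_pos_of_pos (by positivity))) (Real.Gamma_pos_of_pos (by positivity))
  refine ⟨fun k v => main_identity γ cγ hcγ.ne' k v F hF, fun k hk hk2 => ?_⟩
  set A := k * ((d:ℝ) + γ - k + 2) with hA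
  set B := k * (γ + 2 - k) with hB
  have hApos : 0 < A := mul_pos hk (by linarith)
  have hBpos : 0 < B := mul_pos hk (by linarith)
  have hCnn : (0:ℝ) ≤ A / (B/2) := by positivity
  refine ⟨A + B/2, B/2, Real.sqrt (A/(B/2)) + 1, by positivity,
    by positivity, fun v => ?_⟩
  rw [main_identity γ cγ hcγ.ne' k v F hF]
  have hs := jap_pos v
  have hs1 := one_le_jap v
  have hsk2 : jap v ^ (-2:ℝ) * jap v ^ k = jap v ^ (k-2) := by
    rw [← Real.rpow_add hs]; congr 1; ring
  by_cases hv : v ∈ Metric.ball (0 : EuclideanSpace ℝ (Fin d)) (Real.sqrt (A/(B/2)) + 1)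
  · rw [Set.indicator_of_mem hv]
    have h1 : jap v ^ (k-4) ≤ jap v ^ k := Real.rpow_le_rpow_of_exponent_le hs1 (by linarith)
    have expand : ((A + B/2) * 1 - B/2 * jap v ^ (-2:ℝ)) * jap v ^ k
        = (A + B/2) * jap v ^ k - B/2 * jap v ^ (k-2) := by
      rw [sub_mul, mul_one, mul_assoc, hsk2]
    rw [expand]
    nlinarith [mul_le_mul_of_nonneg_left h1 hApos.le, Real.rpow_pos_of_pos hs k,
      Real.rpow_pos_of_pos hs (k-2), hBpos]
  · rw [Set.indicator_of_notMem hv]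
    have hR : Real.sqrt (A/(B/2)) + 1 ≤ ‖v‖ := by
      simpa [Metric.mem_ball, dist_zero_right, not_lt] using hv
    have hAb : A / (B/2) ≤ ‖v‖ ^ 2 := by
      nlinarith [Real.sq_sqrt hCnn, Real.sqrt_nonneg (A/(B/2)), norm_nonneg v]
    have hs2 : A ≤ B/2 * jap v ^ (2:ℝ) := by
      rw [jap_sq]
      rw [div_le_iff₀ (by positivity)] at hAb
      nlinarith
    have e3 : jap v ^ (k-2) = jap v ^ (k-4) * jap v ^ (2:ℝ) := by
      rw [← Real.rpow_add hs]; congr 1; ring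
    have expand : ((A + B/2) * 0 - B/2 * jap v ^ (-2:ℝ)) * jap v ^ k
        = -(B/2) * jap v ^ (k-2) := by
      rw [mul_zero, zero_sub, neg_mul, neg_mul, mul_assoc, hsk2]
    rw [expand, e3, ← hA, ← hB]
    nlinarith [mul_le_mul_of_nonneg_left hs2 (Real.rpow_pos_of_pos hs (k-4)).le,
      Real.rpow_pos_of_pos hs (k-4), Real.rpow_pos_of_pos hs (2:ℝ)]
end
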